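/- Let g be a symmetric n×n real matrix, φ ∈ ℝ with every eigenvalue of φg less than 1, and â ∈ ℝⁿ. Define the single-intervention value function V*_single(g, â, C) = sup { aᵀ (I − φg)⁻² a : a ∈ ℝⁿ, ‖a − â‖² ≤ C }. Then lim_{C→∞} V*_single(g, â, C)/C = 1/(1 − λ₁(φg))², where λ₁(φg) is the largest eigenvalue of φg. -/

import Mathlib

open Matrix

/-- `μ` is a (real) eigenvalue of the matrix `M`. -/
def hasEigen {n : ℕ} (M : Matrix (Fin n) (Fin n) ℝ) (μ : ℝ) : Prop :=
  ∃ v : Fin n → ℝ, v ≠ 0 ∧ M.mulVec v = μ • v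

lemma rayleigh_le {n : ℕ} (A : Matrix (Fin n) (Fin n) ℝ) (hA : A.IsHermitian) (t : ℝ)
    (ht : ∀ μ : ℝ, hasEigen A μ → μ ≤ t) (a : Fin n → ℝ) :
    a ⬝ᵥ A.mulVec a ≤ t * ∑ i, a i ^ 2 := by
  classical
  set b := hA.eigenvectorBasis with hb
  set e := hA.eigenvalues with he
  have hAT : Aᵀ = A := by
    rw [← conjTranspose_eq_transpose_of_trivial]; exact hA
  have het : ∀ i, e i ≤ t := by
    intro i
    refine ht (e i) ⟨⇑(b i), ?_, hA.mulVec_eigenvectorBasis i⟩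
    intro h0
    have h1 : ‖b i‖ = 1 := b.orthonormal.1 i
    have h2 : b i = 0 := by simpa using congrArg (WithLp.equiv 2 (Fin n → ℝ)).symm h0
    rw [h2] at h1; simp at h1
  set x : EuclideanSpace ℝ (Fin n) := (WithLp.equiv 2 (Fin n → ℝ)).symm a with hx
  set y : EuclideanSpace ℝ (Fin n) := (WithLp.equiv 2 (Fin n → ℝ)).symm (A.mulVec a) with hy
  have key : ∀ i, b.repr y i = e i * b.repr x i := by
    intro i
    rw [b.repr_apply_apply, b.repr_apply_apply]
    have h1 : (inner ℝ (b i) y : ℝ) = (⇑(b i)) ⬝ᵥ A.mulVec a := by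
      simp [PiLp.inner_apply, RCLike.inner_apply, hy, dotProduct,
        WithLp.equiv_symm_apply, PiLp.toLp_apply]
      exact Finset.sum_congr rfl (fun j _ => mul_comm _ _)
    have h2 : (⇑(b i)) ⬝ᵥ A.mulVec a = (A.mulVec ⇑(b i)) ⬝ᵥ a := by
      rw [dotProduct_mulVec, ← Matrix.mulVec_transpose, hAT]
    rw [h1, h2, hA.mulVec_eigenvectorBasis i]
    simp only [PiLp.inner_apply, RCLike.inner_apply, hx, dotProduct,
      WithLp.equiv_symm_apply, PiLp.toLp_apply, smul_dotProduct, Pi.smul_apply, smul_eq_mul,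
      starRingEnd_apply, star_trivial, Finset.mul_sum]
    exact Finset.sum_congr rfl (fun j _ => by ring)
  have hinner : a ⬝ᵥ A.mulVec a = (inner ℝ x y : ℝ) := by
    simp [PiLp.inner_apply, RCLike.inner_apply, hx, hy, dotProduct,
      WithLp.equiv_symm_apply, PiLp.toLp_apply]
    exact Finset.sum_congr rfl (fun j _ => mul_comm _ _)
  have hmap : (inner ℝ x y : ℝ) = ∑ i, b.repr x i * b.repr y i := by
    have h := b.repr.inner_map_map x y
    simp only [PiLp.inner_apply, RCLike.inner_apply, starRingEnd_apply, star_trivial] at h ⊢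
    rw [← h]
    exact Finset.sum_congr rfl (fun j _ => mul_comm _ _)
  have hnorm : (∑ i, (b.repr x i) ^ 2) = ∑ i, a i ^ 2 := by
    have := b.repr.inner_map_map x x
    simp only [PiLp.inner_apply, RCLike.inner_apply, starRingEnd_apply, star_trivial] at this
    calc (∑ i, (b.repr x i) ^ 2) = ∑ i, b.repr x i * b.repr x i := by
          exact Finset.sum_congr rfl (fun j _ => by ring)
      _ = ∑ i, x i * x i := this
      _ = ∑ i, a i ^ 2 := by
          exact Finset.sum_congr rfl (fun j _ => by rw [hx, WithLp.equiv_symm_apply, PiLp.toLp_apply]; ring)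
  rw [hinner, hmap, ← hnorm, Finset.mul_sum]
  refine Finset.sum_le_sum (fun i _ => ?_)
  rw [key i]
  have h1 : 0 ≤ (b.repr x i)^2 := sq_nonneg _
  nlinarith [het i, sq_nonneg (b.repr x i)]

set_option maxHeartbeats 1000000 in
/-- The single-intervention value function
`V*_single(g, â, C) = sup { aᵀ(I − φg)⁻²a : ‖a − â‖² ≤ C }` satisfies
`lim_{C→∞} V*_single(g, â, C)/C = 1/(1 − λ₁(φg))²`. -/
theorem stmt15 (n : ℕ) (g : Matrix (Fin n) (Fin n) ℝ) (hg : g.IsSymm) (φ : ℝ)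
    (heig : ∀ μ : ℝ, hasEigen (φ • g) μ → μ < 1)
    (ahat : Fin n → ℝ)
    (lam1 : ℝ) (hlam : hasEigen (φ • g) lam1)
    (hmax : ∀ μ : ℝ, hasEigen (φ • g) μ → μ ≤ lam1) :
    Filter.Tendsto
      (fun C : ℝ =>
        (sSup {v : ℝ | ∃ a : Fin n → ℝ, (∑ i, (a i - ahat i) ^ 2) ≤ C ∧
          v = a ⬝ᵥ (((1 - φ • g)⁻¹ ^ 2).mulVec a)}) / C)
      Filter.atTop (nhds (1 / (1 - lam1) ^ 2)) := by
  classical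
  set A : Matrix (Fin n) (Fin n) ℝ := φ • g with hAdef
  set B : Matrix (Fin n) (Fin n) ℝ := 1 - A with hBdef
  set M : Matrix (Fin n) (Fin n) ℝ := B⁻¹ ^ 2 with hMdef
  set L : ℝ := 1 / (1 - lam1) ^ 2 with hLdef
  have hlam1 : lam1 < 1 := heig lam1 hlam
  have h1l : 0 < 1 - lam1 := by linarith
  have hL : 0 < L := by positivity
  have hAT : Aᵀ = A := by
    rw [hAdef, transpose_smul, hg]
  have hA : A.IsHermitian := by
    rw [Matrix.IsHermitian, conjTranspose_eq_transpose_of_trivial, hAT]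
  have hBT : Bᵀ = B := by
    rw [hBdef, transpose_sub, transpose_one, hAT]
  have hdet : IsUnit B.det := by
    rw [isUnit_iff_ne_zero]
    intro h0
    obtain ⟨v, hv0, hv⟩ := (Matrix.exists_mulVec_eq_zero_iff).2 h0
    have : A.mulVec v = (1 : ℝ) • v := by
      have := hv
      rw [hBdef, Matrix.sub_mulVec, Matrix.one_mulVec, sub_eq_zero] at this
      rw [← this, one_smul]
    exact absurd (heig 1 ⟨v, hv0, this⟩) (lt_irrefl 1)
  have hBiT : (B⁻¹)ᵀ = B⁻¹ := by rw [Matrix.transpose_nonsing_inv, hBT]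
  have hM2 : M = B⁻¹ * B⁻¹ := by rw [hMdef, pow_two]
  have hMT : Mᵀ = M := by rw [hM2, Matrix.transpose_mul, hBiT]
  -- quadratic form identity: a ⬝ᵥ M a = ‖B⁻¹ a‖²
  have hquad : ∀ a : Fin n → ℝ, a ⬝ᵥ M.mulVec a = ∑ i, (B⁻¹.mulVec a) i ^ 2 := by
    intro a
    have : M.mulVec a = B⁻¹.mulVec (B⁻¹.mulVec a) := by
      rw [hM2, ← Matrix.mulVec_mulVec]
    rw [this, dotProduct_mulVec, ← Matrix.mulVec_transpose, hBiT, dotProduct]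
    exact Finset.sum_congr rfl (fun i _ => by ring)
  have hpsd : ∀ a : Fin n → ℝ, 0 ≤ a ⬝ᵥ M.mulVec a := by
    intro a; rw [hquad]; positivity
  -- upper bound on the quadratic form
  have hub : ∀ a : Fin n → ℝ, a ⬝ᵥ M.mulVec a ≤ L * ∑ i, a i ^ 2 := by
    intro a
    set w : Fin n → ℝ := B⁻¹.mulVec a with hw
    have haw : a = B.mulVec w := by
      rw [hw, Matrix.mulVec_mulVec, Matrix.mul_nonsing_inv B hdet, Matrix.one_mulVec]
    have hray : w ⬝ᵥ A.mulVec w ≤ lam1 * ∑ i, w i ^ 2 := rayleigh_le A hA lam1 hmax w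
    have hwB : w ⬝ᵥ B.mulVec w = (∑ i, w i ^ 2) - w ⬝ᵥ A.mulVec w := by
      rw [hBdef, Matrix.sub_mulVec, Matrix.one_mulVec, dotProduct_sub]
      congr 1
      rw [dotProduct]
      exact Finset.sum_congr rfl (fun i _ => by ring)
    have hCS : (w ⬝ᵥ B.mulVec w) ^ 2 ≤ (∑ i, w i ^ 2) * ∑ i, (B.mulVec w) i ^ 2 := by
      rw [dotProduct]
      exact Finset.sum_mul_sq_le_sq_mul_sq Finset.univ w (B.mulVec w)
    set S : ℝ := ∑ i, w i ^ 2 with hS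
    set T : ℝ := ∑ i, (B.mulVec w) i ^ 2 with hT
    have hS0 : 0 ≤ S := by positivity
    have hT0 : 0 ≤ T := by positivity
    have hlow : (1 - lam1) * S ≤ w ⬝ᵥ B.mulVec w := by rw [hwB]; nlinarith
    have hBw0 : 0 ≤ w ⬝ᵥ B.mulVec w := le_trans (by nlinarith) hlow
    have hkey : (1 - lam1) ^ 2 * S ^ 2 ≤ S * T := by
      have h2 : ((1 - lam1) * S) ^ 2 ≤ (w ⬝ᵥ B.mulVec w) ^ 2 :=
        pow_le_pow_left₀ (by positivity) hlow 2
      calc (1 - lam1) ^ 2 * S ^ 2 = ((1 - lam1) * S) ^ 2 := by ring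
        _ ≤ (w ⬝ᵥ B.mulVec w) ^ 2 := h2
        _ ≤ S * T := hCS
    have hgoal : S ≤ L * T := by
      rcases eq_or_lt_of_le hS0 with h | h
      · rw [← h]; positivity
      · have hLval : L * (1 - lam1) ^ 2 = 1 := by
          rw [hLdef]; field_simp
        nlinarith
    calc a ⬝ᵥ M.mulVec a = S := by rw [hquad a, hS, hw]
      _ ≤ L * T := hgoal
      _ = L * ∑ i, a i ^ 2 := by rw [hT, ← haw]
  -- eigenvector of M with eigenvalue L
  obtain ⟨v, hv0, hvA⟩ := hlam
  have hvB : B.mulVec v = (1 - lam1) • v := by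
    rw [hBdef, Matrix.sub_mulVec, Matrix.one_mulVec, hvA, sub_smul, one_smul]
  have hvBi : B⁻¹.mulVec v = (1 - lam1)⁻¹ • v := by
    have h1 : B⁻¹.mulVec (B.mulVec v) = v := by
      rw [Matrix.mulVec_mulVec, Matrix.nonsing_inv_mul B hdet, Matrix.one_mulVec]
    rw [hvB, Matrix.mulVec_smul] at h1
    have h2 := congrArg (fun z => (1 - lam1)⁻¹ • z) h1
    simp only [smul_smul, inv_mul_cancel₀ (ne_of_gt h1l), one_smul] at h2
    exact h2
  have hvM : M.mulVec v = L • v := by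
    have : M.mulVec v = B⁻¹.mulVec (B⁻¹.mulVec v) := by
      rw [hM2, ← Matrix.mulVec_mulVec]
    rw [this, hvBi, Matrix.mulVec_smul, hvBi, smul_smul, hLdef]
    congr 1
    rw [one_div, ← mul_inv, ← pow_two]
  -- normalize and fix sign
  have hvs : 0 < ∑ i, v i ^ 2 := by
    by_contra h
    push_neg at h
    have h0 : ∑ i, v i ^ 2 = 0 := le_antisymm h (by positivity)
    apply hv0
    funext i
    have hi := (Finset.sum_eq_zero_iff_of_nonneg (fun i _ => sq_nonneg (v i))).1 h0 i (Finset.mem_univ i)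
    exact pow_eq_zero_iff two_ne_zero |>.1 hi
  set s : ℝ := Real.sqrt (∑ i, v i ^ 2) with hs
  have hs0 : 0 < s := Real.sqrt_pos.2 hvs
  set u0 : Fin n → ℝ := s⁻¹ • v with hu0
  have hssq : s ^ 2 = ∑ i, v i ^ 2 := Real.sq_sqrt (le_of_lt hvs)
  have hu0sq : ∑ i, u0 i ^ 2 = 1 := by
    have : ∑ i, u0 i ^ 2 = s⁻¹ ^ 2 * ∑ i, v i ^ 2 := by
      rw [hu0, Finset.mul_sum]
      exact Finset.sum_congr rfl (fun i _ => by simp [mul_pow])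
    rw [this, ← hssq]
    field_simp
  have hu0M : M.mulVec u0 = L • u0 := by
    rw [hu0, Matrix.mulVec_smul, hvM, smul_smul, mul_comm, ← smul_smul]
  set u : Fin n → ℝ := if 0 ≤ ahat ⬝ᵥ u0 then u0 else -u0 with hu
  have husq : ∑ i, u i ^ 2 = 1 := by
    rw [hu]; split_ifs with h
    · exact hu0sq
    · simp only [Pi.neg_apply, neg_sq]; exact hu0sq
  have huM : M.mulVec u = L • u := by
    rw [hu]; split_ifs with h
    · exact hu0M
    · rw [Matrix.mulVec_neg, hu0M, smul_neg]
  have hud : 0 ≤ ahat ⬝ᵥ u := by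
    rw [hu]; split_ifs with h
    · exact h
    · rw [dotProduct_neg]; linarith [lt_of_not_ge h]
  -- analysis part
  set R : ℝ := Real.sqrt (∑ i, ahat i ^ 2) with hR
  have hR0 : 0 ≤ R := Real.sqrt_nonneg _
  have hRsq : R ^ 2 = ∑ i, ahat i ^ 2 := Real.sq_sqrt (by positivity)
  have hsum_le : ∀ C : ℝ, 0 ≤ C → ∀ a : Fin n → ℝ, (∑ i, (a i - ahat i) ^ 2) ≤ C →
      ∑ i, a i ^ 2 ≤ (Real.sqrt C + R) ^ 2 := by
    intro C hC a ha
    set D : ℝ := ∑ i, (a i - ahat i) ^ 2 with hD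
    have hD0 : 0 ≤ D := by positivity
    have hcross : ∑ i, (a i - ahat i) * ahat i ≤ Real.sqrt C * R := by
      have h1 : (∑ i, (a i - ahat i) * ahat i) ^ 2 ≤ D * ∑ i, ahat i ^ 2 :=
        Finset.sum_mul_sq_le_sq_mul_sq Finset.univ _ _
      calc ∑ i, (a i - ahat i) * ahat i ≤ |∑ i, (a i - ahat i) * ahat i| := le_abs_self _
        _ = Real.sqrt ((∑ i, (a i - ahat i) * ahat i) ^ 2) := (Real.sqrt_sq_eq_abs _).symm
        _ ≤ Real.sqrt (D * ∑ i, ahat i ^ 2) := Real.sqrt_le_sqrt h1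
        _ = Real.sqrt D * Real.sqrt (∑ i, ahat i ^ 2) := Real.sqrt_mul hD0 _
        _ ≤ Real.sqrt C * R := by
            rw [hR]
            exact mul_le_mul_of_nonneg_right (Real.sqrt_le_sqrt ha) (Real.sqrt_nonneg _)
    have hexp : ∑ i, a i ^ 2 = D + 2 * (∑ i, (a i - ahat i) * ahat i) + ∑ i, ahat i ^ 2 := by
      rw [hD, Finset.mul_sum, ← Finset.sum_add_distrib, ← Finset.sum_add_distrib]
      exact Finset.sum_congr rfl (fun i _ => by ring)
    have hCs : Real.sqrt C ^ 2 = C := Real.sq_sqrt hC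
    have hsC0 : 0 ≤ Real.sqrt C := Real.sqrt_nonneg _
    rw [hexp, ← hRsq]
    nlinarith [ha, hcross]
  have hbddS : ∀ C : ℝ, 0 ≤ C → ∀ x ∈ {v : ℝ | ∃ a : Fin n → ℝ,
      (∑ i, (a i - ahat i) ^ 2) ≤ C ∧ v = a ⬝ᵥ (M.mulVec a)},
      x ≤ L * (Real.sqrt C + R) ^ 2 := by
    rintro C hC x ⟨a, ha, rfl⟩
    calc a ⬝ᵥ M.mulVec a ≤ L * ∑ i, a i ^ 2 := hub a
      _ ≤ L * (Real.sqrt C + R) ^ 2 :=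
          mul_le_mul_of_nonneg_left (hsum_le C hC a ha) hL.le
  have hBdd : ∀ C : ℝ, 0 ≤ C → BddAbove {v : ℝ | ∃ a : Fin n → ℝ,
      (∑ i, (a i - ahat i) ^ 2) ≤ C ∧ v = a ⬝ᵥ (M.mulVec a)} :=
    fun C hC => ⟨L * (Real.sqrt C + R) ^ 2, fun x hx => hbddS C hC x hx⟩
  have hne : ∀ C : ℝ, 0 ≤ C → (ahat ⬝ᵥ M.mulVec ahat) ∈ {v : ℝ | ∃ a : Fin n → ℝ,
      (∑ i, (a i - ahat i) ^ 2) ≤ C ∧ v = a ⬝ᵥ (M.mulVec a)} := by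
    intro C hC
    exact ⟨ahat, by simpa using hC, rfl⟩
  have hlow : ∀ C : ℝ, 0 ≤ C → L * C ≤ sSup {v : ℝ | ∃ a : Fin n → ℝ,
      (∑ i, (a i - ahat i) ^ 2) ≤ C ∧ v = a ⬝ᵥ (M.mulVec a)} := by
    intro C hC
    set c : ℝ := Real.sqrt C with hc
    have hc0 : 0 ≤ c := Real.sqrt_nonneg _
    have hcs : c ^ 2 = C := Real.sq_sqrt hC
    set a : Fin n → ℝ := ahat + c • u with ha
    have hcon : (∑ i, (a i - ahat i) ^ 2) ≤ C := by
      have : ∀ i, (a i - ahat i) ^ 2 = C * u i ^ 2 := by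
        intro i
        rw [ha]
        simp only [Pi.add_apply, Pi.smul_apply, smul_eq_mul, add_sub_cancel_left]
        rw [mul_pow, hcs]
      rw [Finset.sum_congr rfl (fun i _ => this i), ← Finset.mul_sum, husq, mul_one]
    have huu : u ⬝ᵥ u = 1 := by
      rw [dotProduct, ← husq]
      exact Finset.sum_congr rfl (fun i _ => by ring)
    have hMu : ahat ⬝ᵥ M.mulVec u = L * (ahat ⬝ᵥ u) := by
      rw [huM, dotProduct_smul, smul_eq_mul]
    have huMa : u ⬝ᵥ M.mulVec ahat = L * (ahat ⬝ᵥ u) := by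
      rw [dotProduct_mulVec, ← Matrix.mulVec_transpose, hMT, huM, smul_dotProduct,
        smul_eq_mul, dotProduct_comm]
    have huMu : u ⬝ᵥ M.mulVec u = L := by
      rw [huM, dotProduct_smul, smul_eq_mul, huu, mul_one]
    have hval : a ⬝ᵥ M.mulVec a
        = ahat ⬝ᵥ M.mulVec ahat + 2 * c * (L * (ahat ⬝ᵥ u)) + C * L := by
      rw [ha, Matrix.mulVec_add, Matrix.mulVec_smul, add_dotProduct, smul_dotProduct,
        dotProduct_add, dotProduct_add, dotProduct_smul, dotProduct_smul, smul_eq_mul,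
        smul_eq_mul, smul_eq_mul, hMu, huMa, huMu, ← hcs]
      ring
    have hval_ge : L * C ≤ a ⬝ᵥ M.mulVec a := by
      rw [hval]
      nlinarith [hpsd ahat, mul_nonneg hc0 (mul_nonneg hL.le hud)]
    exact le_trans hval_ge (le_csSup (hBdd C hC) ⟨a, hcon, rfl⟩)
  have hupp : ∀ C : ℝ, 0 ≤ C → sSup {v : ℝ | ∃ a : Fin n → ℝ,
      (∑ i, (a i - ahat i) ^ 2) ≤ C ∧ v = a ⬝ᵥ (M.mulVec a)}
      ≤ L * (Real.sqrt C + R) ^ 2 := by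
    intro C hC
    exact csSup_le ⟨_, hne C hC⟩ (fun x hx => hbddS C hC x hx)
  -- the limit
  have hsqrtTop : Filter.Tendsto Real.sqrt Filter.atTop Filter.atTop := by
    apply Filter.tendsto_atTop_atTop.2
    intro b
    refine ⟨(max b 0) ^ 2, fun C hC => ?_⟩
    have h := Real.sqrt_le_sqrt hC
    rw [Real.sqrt_sq (le_max_right b 0)] at h
    exact le_trans (le_max_left b 0) h
  have h0 : Filter.Tendsto (fun C : ℝ => R / Real.sqrt C) Filter.atTop (nhds 0) :=
    Filter.Tendsto.div_atTop tendsto_const_nhds hsqrtTop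
  have hg2 : Filter.Tendsto (fun C : ℝ => L * (1 + R / Real.sqrt C) ^ 2)
      Filter.atTop (nhds L) := by
    have h1 : Filter.Tendsto (fun C : ℝ => (1 + R / Real.sqrt C) ^ 2)
        Filter.atTop (nhds ((1 + 0) ^ 2)) := (tendsto_const_nhds.add h0).pow 2
    simpa using h1.const_mul L
  have hLgoal : nhds ((1:ℝ) / (1 - lam1) ^ 2) = nhds L := by rw [hLdef]
  rw [hLgoal]
  apply tendsto_of_tendsto_of_tendsto_of_le_of_le'
    (tendsto_const_nhds : Filter.Tendsto (fun _ : ℝ => L) Filter.atTop (nhds L)) hg2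
  · filter_upwards [Filter.eventually_ge_atTop 1] with C hC1
    have hC0 : (0:ℝ) ≤ C := by linarith
    have hCpos : (0:ℝ) < C := by linarith
    rw [le_div_iff₀ hCpos]
    exact hlow C hC0
  · filter_upwards [Filter.eventually_ge_atTop 1] with C hC1
    have hC0 : (0:ℝ) ≤ C := by linarith
    have hCpos : (0:ℝ) < C := by linarith
    rw [div_le_iff₀ hCpos]
    refine le_trans (hupp C hC0) (le_of_eq ?_)
    have hCs : Real.sqrt C ^ 2 = C := Real.sq_sqrt hC0
    have hsC : 0 < Real.sqrt C := Real.sqrt_pos.2 hCpos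
    rw [← hCs]
    field_simp
    rw [Real.sqrt_sq hsC.le]
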